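/- Let c, m, σ be strictly positive real numbers. The maximum of E[(X − c)^+] over all nonnegative random variables X with E[X] = m and Var(X) = σ² is attained and equals m − c·m²/(m²+σ²) if c ≤ (m²+σ²)/(2m), and equals (m−c)/2 + (1/2)·√((m−c)² + σ²) if c ≥ (m²+σ²)/(2m). -/

import Mathlib

open MeasureTheory


noncomputable def loSet (c m σ : ℝ) : Set ℝ :=
  {y : ℝ | ∃ ν : Measure ℝ, IsProbabilityMeasure ν ∧
      (∀ᵐ x ∂ν, 0 ≤ x) ∧ (∫ x, x ∂ν) = m ∧ (∫ x, (x - m) ^ 2 ∂ν) = σ ^ 2 ∧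
      y = ∫ x, max (x - c) 0 ∂ν}

lemma integrable_dirac_my {f : ℝ → ℝ} (hf : Measurable f) (a : ℝ) :
    Integrable f (Measure.dirac a) := by
  refine ⟨hf.aestronglyMeasurable, ?_⟩
  simp [HasFiniteIntegral, lintegral_dirac]

noncomputable def tpm (p q a b : ℝ) : Measure ℝ :=
  ENNReal.ofReal p • Measure.dirac a + ENNReal.ofReal q • Measure.dirac b

lemma tpm_integral (p q a b : ℝ) (hp : 0 ≤ p) (hq : 0 ≤ q) (f : ℝ → ℝ)
    (hf : Measurable f) :
    ∫ x, f x ∂(tpm p q a b) = p * f a + q * f b := by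
  rw [tpm, integral_add_measure, integral_smul_measure, integral_smul_measure,
      integral_dirac, integral_dirac]
  · simp [ENNReal.toReal_ofReal hp, ENNReal.toReal_ofReal hq]
  · exact (integrable_dirac_my hf a).smul_measure ENNReal.ofReal_ne_top
  · exact (integrable_dirac_my hf b).smul_measure ENNReal.ofReal_ne_top

lemma tpm_prob (p q a b : ℝ) (hp : 0 ≤ p) (hq : 0 ≤ q) (hpq : p + q = 1) :
    IsProbabilityMeasure (tpm p q a b) := by
  constructor
  simp [tpm, ← ENNReal.ofReal_add hp hq, hpq]

lemma tpm_ae_nonneg (p q a b : ℝ) (ha : 0 ≤ a) (hb : 0 ≤ b) :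
    ∀ᵐ x ∂(tpm p q a b), 0 ≤ x := by
  rw [ae_iff]
  have e : {x : ℝ | ¬ 0 ≤ x} = {x : ℝ | x < 0} := by ext x; simp [not_le]
  rw [e]
  have hma : Measure.dirac a {x : ℝ | x < 0} = 0 := by
    simp [Measure.dirac_apply, Set.indicator_apply, not_lt.mpr ha]
  have hmb : Measure.dirac b {x : ℝ | x < 0} = 0 := by
    simp [Measure.dirac_apply, Set.indicator_apply, not_lt.mpr hb]
  simp [tpm, Measure.add_apply, hma, hmb]

lemma measurable_sq_sub (m : ℝ) : Measurable (fun x : ℝ => (x - m)^2) := by fun_prop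

lemma measurable_maxcall (c : ℝ) : Measurable (fun x : ℝ => max (x - c) 0) :=
  (measurable_id.sub measurable_const).max measurable_const

lemma mem_case1 (c m σ : ℝ) (hc : 0 < c) (hm : 0 < m) (hσ : 0 < σ)
    (hcase : c ≤ (m ^ 2 + σ ^ 2) / (2 * m)) :
    (m - c * m ^ 2 / (m ^ 2 + σ ^ 2)) ∈ loSet c m σ := by
  set s : ℝ := m ^ 2 + σ ^ 2 with hs_def
  have hs : 0 < s := by positivity
  have hp : (0:ℝ) ≤ σ^2 / s := by positivity
  have hq : (0:ℝ) ≤ m^2 / s := by positivity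
  refine ⟨tpm (σ^2/s) (m^2/s) 0 (s/m), tpm_prob _ _ _ _ hp hq (by field_simp; linarith),
    tpm_ae_nonneg _ _ _ _ le_rfl (by positivity), ?_, ?_, ?_⟩
  · rw [tpm_integral _ _ _ _ hp hq _ measurable_id']
    field_simp; ring
  · rw [tpm_integral _ _ _ _ hp hq _ (measurable_sq_sub m)]
    field_simp
    ring
  · rw [tpm_integral _ _ _ _ hp hq _ (measurable_maxcall c)]
    have h1 : max (0 - c) 0 = 0 := by
      rw [max_eq_right]; linarith
    have h2 : max (s/m - c) 0 = s/m - c := by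
      rw [max_eq_left]
      have : c ≤ s / (2*m) := hcase
      have h3 : s / (2*m) ≤ s/m := by
        rw [div_le_div_iff₀ (by positivity) (by positivity)]
        nlinarith
      linarith
    rw [h1, h2]
    field_simp
    ring

lemma mem_case2 (c m σ : ℝ) (hc : 0 < c) (hm : 0 < m) (hσ : 0 < σ)
    (hcase : (m ^ 2 + σ ^ 2) / (2 * m) ≤ c) :
    ((m - c) / 2 + (1 / 2) * Real.sqrt ((m - c) ^ 2 + σ ^ 2)) ∈ loSet c m σ := by
  set t : ℝ := Real.sqrt ((m - c) ^ 2 + σ ^ 2) with ht_def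
  have ht2 : t^2 = (m - c)^2 + σ^2 := Real.sq_sqrt (by positivity)
  have ht : 0 < t := Real.sqrt_pos.mpr (by positivity)
  have hs2c : m^2 + σ^2 ≤ 2*m*c := by
    rw [div_le_iff₀ (by positivity)] at hcase
    linarith
  have htc : t ≤ c := by nlinarith
  have hut : m - c ≤ t := by nlinarith
  have hut' : -t ≤ m - c := by nlinarith
  have hp : (0:ℝ) ≤ (t - (m - c)) / (2*t) := by
    apply div_nonneg <;> linarith
  have hq : (0:ℝ) ≤ ((m - c) + t) / (2*t) := by
    apply div_nonneg <;> linarith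
  refine ⟨tpm ((t - (m - c))/(2*t)) (((m - c) + t)/(2*t)) (c - t) (c + t),
    tpm_prob _ _ _ _ hp hq (by field_simp; ring),
    tpm_ae_nonneg _ _ _ _ (by linarith) (by linarith), ?_, ?_, ?_⟩
  · rw [tpm_integral _ _ _ _ hp hq _ measurable_id']
    field_simp
    ring
  · rw [tpm_integral _ _ _ _ hp hq _ (measurable_sq_sub m)]
    field_simp
    nlinarith [ht2, ht]
  · rw [tpm_integral _ _ _ _ hp hq _ (measurable_maxcall c)]
    have h1 : max (c - t - c) 0 = 0 := by
      rw [max_eq_right]; linarith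
    have h2 : max (c + t - c) 0 = t := by
      rw [max_eq_left] <;> linarith
    rw [h1, h2]
    field_simp
    ring

lemma loSet_def (c m σ : ℝ) : loSet c m σ =
  {y : ℝ | ∃ ν : Measure ℝ, IsProbabilityMeasure ν ∧
      (∀ᵐ x ∂ν, 0 ≤ x) ∧ (∫ x, x ∂ν) = m ∧ (∫ x, (x - m) ^ 2 ∂ν) = σ ^ 2 ∧
      y = ∫ x, max (x - c) 0 ∂ν} := rfl


lemma quad_bound (ν : Measure ℝ) [IsProbabilityMeasure ν] (c m σ A B C : ℝ)
    (hm : 0 < m) (hσ : 0 < σ)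
    (hmean : ∫ x, x ∂ν = m) (hvar : ∫ x, (x - m)^2 ∂ν = σ^2)
    (hpt : ∀ᵐ x ∂ν, max (x - c) 0 ≤ A*x^2 + B*x + C) :
    ∫ x, max (x - c) 0 ∂ν ≤ A*(m^2+σ^2) + B*m + C := by
  have hx : Integrable (fun x : ℝ => x) ν := by
    by_contra h
    rw [integral_undef h] at hmean
    exact hm.ne' hmean.symm
  have hv : Integrable (fun x : ℝ => (x - m)^2) ν := by
    by_contra h
    rw [integral_undef h] at hvar
    exact (by positivity : (0:ℝ) < σ^2).ne' hvar.symm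
  have hlin : Integrable (fun x : ℝ => 2*m*x - m^2) ν := by
    have := (hx.const_mul (2*m)).sub (integrable_const (m^2))
    exact this
  have hx2 : Integrable (fun x : ℝ => x^2) ν := by
    have e : (fun x : ℝ => x^2) = fun x => (x - m)^2 + (2*m*x - m^2) :=
      funext fun x => by ring
    rw [e]
    exact hv.add hlin
  have e1 : ∫ x, (x - m)^2 ∂ν = (∫ x, x^2 ∂ν) - (2*m*m - m^2) := by
    have e : (fun x : ℝ => (x - m)^2) = fun x => x^2 - (2*m*x - m^2) :=
      funext fun x => by ring
    rw [e, integral_sub hx2 hlin, integral_sub (hx.const_mul (2*m)) (integrable_const _),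
        integral_const_mul, hmean]
    simp
  have hI2 : ∫ x, x^2 ∂ν = m^2 + σ^2 := by rw [e1] at hvar; linarith
  have hmeas : AEStronglyMeasurable (fun x : ℝ => max (x - c) 0) ν :=
    ((continuous_id.sub continuous_const).max continuous_const).aestronglyMeasurable
  have hg : Integrable (fun x : ℝ => |x| + |c|) ν := by
    have := hx.abs.add (integrable_const |c|)
    simpa using this
  have hmax : Integrable (fun x : ℝ => max (x - c) 0) ν := by
    refine hg.mono' hmeas (ae_of_all _ fun x => ?_)
    rw [Real.norm_eq_abs]
    rcases le_total (x - c) 0 with h | h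
    · rw [max_eq_right h]
      simp only [abs_zero]
      positivity
    · rw [max_eq_left h, abs_of_nonneg h]
      have h1 := le_abs_self x
      have h2 := neg_abs_le c
      linarith
  have hq : Integrable (fun x : ℝ => A*x^2 + B*x) ν := by
    have := (hx2.const_mul A).add (hx.const_mul B)
    exact this
  have hφ : Integrable (fun x : ℝ => A*x^2 + B*x + C) ν := by
    have := hq.add (integrable_const C)
    simpa using this
  calc ∫ x, max (x - c) 0 ∂ν ≤ ∫ x, A*x^2 + B*x + C ∂ν := integral_mono_ae hmax hφ hpt
    _ = A*(m^2+σ^2) + B*m + C := by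
        rw [integral_add hq (integrable_const C),
            integral_add (hx2.const_mul A) (hx.const_mul B),
            integral_const_mul, integral_const_mul, hI2, hmean]
        simp


lemma ub_case1 (c m σ : ℝ) (hc : 0 < c) (hm : 0 < m) (hσ : 0 < σ)
    (hcase : c ≤ (m ^ 2 + σ ^ 2) / (2 * m)) :
    ∀ y ∈ loSet c m σ, y ≤ m - c * m ^ 2 / (m ^ 2 + σ ^ 2) := by
  rw [loSet_def]
  rintro y ⟨ν, hprob, h0, hmean, hvar, rfl⟩
  set s : ℝ := m ^ 2 + σ ^ 2 with hs_def
  have hs : 0 < s := by positivity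
  have h2cm : 2 * m * c ≤ s := by
    rw [le_div_iff₀ (by positivity)] at hcase; linarith
  have hb := quad_bound ν c m σ (c*m^2/s^2) (1 - 2*c*m/s) 0 hm hσ hmean hvar ?_
  · calc ∫ x, max (x - c) 0 ∂ν ≤ (c*m^2/s^2)*(m^2+σ^2) + (1 - 2*c*m/s)*m + 0 := hb
      _ = m - c * m ^ 2 / s := by rw [← hs_def]; field_simp; ring
  · filter_upwards [h0] with x hx
    have hA : 0 ≤ c*m^2/s^2 := by positivity
    have hB : 0 ≤ 1 - 2*c*m/s := by
      rw [sub_nonneg, div_le_one hs]; linarith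
    apply max_le
    · have key : (c*m^2/s^2)*x^2 + (1 - 2*c*m/s)*x + 0 - (x - c) = c*(m*x-s)^2/s^2 := by
        field_simp; ring
      have hpos : (0:ℝ) ≤ c*(m*x-s)^2/s^2 := by positivity
      linarith
    · have := add_nonneg (mul_nonneg hA (sq_nonneg x)) (mul_nonneg hB hx)
      linarith

lemma ub_case2 (c m σ : ℝ) (hc : 0 < c) (hm : 0 < m) (hσ : 0 < σ) :
    ∀ y ∈ loSet c m σ, y ≤ (m - c) / 2 + (1 / 2) * Real.sqrt ((m - c) ^ 2 + σ ^ 2) := by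
  rw [loSet_def]
  rintro y ⟨ν, hprob, h0, hmean, hvar, rfl⟩
  set t : ℝ := Real.sqrt ((m - c) ^ 2 + σ ^ 2) with ht_def
  have ht2 : t^2 = (m - c)^2 + σ^2 := Real.sq_sqrt (by positivity)
  have ht : 0 < t := Real.sqrt_pos.mpr (by positivity)
  have hb := quad_bound ν c m σ (1/(4*t)) (-(2*(c-t))/(4*t)) ((c-t)^2/(4*t)) hm hσ hmean hvar ?_
  · calc ∫ x, max (x - c) 0 ∂ν
        ≤ (1/(4*t))*(m^2+σ^2) + (-(2*(c-t))/(4*t))*m + (c-t)^2/(4*t) := hb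
      _ = (m - c) / 2 + (1 / 2) * t := by field_simp; linear_combination (-2) * ht2
  · refine ae_of_all _ fun x => ?_
    apply max_le
    · have key : (1/(4*t))*x^2 + (-(2*(c-t))/(4*t))*x + (c-t)^2/(4*t) - (x - c)
          = (x - (c+t))^2/(4*t) := by
        field_simp; ring
      have hpos : (0:ℝ) ≤ (x - (c+t))^2/(4*t) := by positivity
      linarith
    · have key : (1/(4*t))*x^2 + (-(2*(c-t))/(4*t))*x + (c-t)^2/(4*t)
          = (x - (c-t))^2/(4*t) := by
        field_simp; ring
      have hpos : (0:ℝ) ≤ (x - (c-t))^2/(4*t) := by positivity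
      linarith

theorem lo_bound (c m σ : ℝ) (hc : 0 < c) (hm : 0 < m) (hσ : 0 < σ) :
    (c ≤ (m ^ 2 + σ ^ 2) / (2 * m) →
      sSup {y : ℝ | ∃ ν : Measure ℝ, IsProbabilityMeasure ν ∧
          (∀ᵐ x ∂ν, 0 ≤ x) ∧ (∫ x, x ∂ν) = m ∧ (∫ x, (x - m) ^ 2 ∂ν) = σ ^ 2 ∧
          y = ∫ x, max (x - c) 0 ∂ν}
        = m - c * m ^ 2 / (m ^ 2 + σ ^ 2)) ∧
    ((m ^ 2 + σ ^ 2) / (2 * m) ≤ c →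
      sSup {y : ℝ | ∃ ν : Measure ℝ, IsProbabilityMeasure ν ∧
          (∀ᵐ x ∂ν, 0 ≤ x) ∧ (∫ x, x ∂ν) = m ∧ (∫ x, (x - m) ^ 2 ∂ν) = σ ^ 2 ∧
          y = ∫ x, max (x - c) 0 ∂ν}
        = (m - c) / 2 + (1 / 2) * Real.sqrt ((m - c) ^ 2 + σ ^ 2)) ∧
    sSup {y : ℝ | ∃ ν : Measure ℝ, IsProbabilityMeasure ν ∧
          (∀ᵐ x ∂ν, 0 ≤ x) ∧ (∫ x, x ∂ν) = m ∧ (∫ x, (x - m) ^ 2 ∂ν) = σ ^ 2 ∧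
          y = ∫ x, max (x - c) 0 ∂ν}
      ∈ {y : ℝ | ∃ ν : Measure ℝ, IsProbabilityMeasure ν ∧
          (∀ᵐ x ∂ν, 0 ≤ x) ∧ (∫ x, x ∂ν) = m ∧ (∫ x, (x - m) ^ 2 ∂ν) = σ ^ 2 ∧
          y = ∫ x, max (x - c) 0 ∂ν} := by
  have hset : {y : ℝ | ∃ ν : Measure ℝ, IsProbabilityMeasure ν ∧
          (∀ᵐ x ∂ν, 0 ≤ x) ∧ (∫ x, x ∂ν) = m ∧ (∫ x, (x - m) ^ 2 ∂ν) = σ ^ 2 ∧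
          y = ∫ x, max (x - c) 0 ∂ν} = loSet c m σ := rfl
  rw [hset]
  have g1 : c ≤ (m ^ 2 + σ ^ 2) / (2 * m) →
      IsGreatest (loSet c m σ) (m - c * m ^ 2 / (m ^ 2 + σ ^ 2)) :=
    fun h => ⟨mem_case1 c m σ hc hm hσ h, ub_case1 c m σ hc hm hσ h⟩
  have g2 : (m ^ 2 + σ ^ 2) / (2 * m) ≤ c →
      IsGreatest (loSet c m σ) ((m - c) / 2 + (1 / 2) * Real.sqrt ((m - c) ^ 2 + σ ^ 2)) :=
    fun h => ⟨mem_case2 c m σ hc hm hσ h, ub_case2 c m σ hc hm hσ⟩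
  refine ⟨fun h => (g1 h).csSup_eq, fun h => (g2 h).csSup_eq, ?_⟩
  rcases le_total c ((m ^ 2 + σ ^ 2) / (2 * m)) with h | h
  · rw [(g1 h).csSup_eq]; exact (g1 h).1
  · rw [(g2 h).csSup_eq]; exact (g2 h).1
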